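/- Let q be a prime power, ℓ ≥ 1, and let S and T' be F_q-subspaces of F_{q^ℓ} with dim S = s and dim T' = ℓ - s, where 1 ≤ s ≤ ℓ. Then there exists a nonzero δ ∈ F_{q^ℓ} such that S ⊕ δT' = F_{q^ℓ}, i.e., S ∩ δT' = {0}. -/

import Mathlib

open Module

lemma stmt0_aux (a b : ℕ) (ha : 2 ≤ a) (hb : 1 ≤ b) : (a - 1) * (b - 1) < a * b - 1 := by
  obtain ⟨a', rfl⟩ : ∃ a', a = a' + 2 := ⟨a - 2, by omega⟩
  obtain ⟨b', rfl⟩ : ∃ b', b = b' + 1 := ⟨b - 1, by omega⟩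
  have h1 : a' + 2 - 1 = a' + 1 := rfl
  have h2 : b' + 1 - 1 = b' := rfl
  rw [h1, h2]
  have h : (a' + 1) * b' + 2 ≤ (a' + 2) * (b' + 1) := by nlinarith
  omega

/-- For `F_q`-subspaces `S`, `T'` of `F_{q^ℓ}` with `dim S = s`,
`dim T' = ℓ - s`, `1 ≤ s ≤ ℓ`, there exists a nonzero `δ` with `S ⊕ δT' = F_{q^ℓ}`. -/
theorem stmt0 {K F : Type*} [Field K] [Field F] [Algebra K F] [Fintype K] [Fintype F]
    (q ℓ s : ℕ) (hq : Fintype.card K = q) (hℓ : finrank K F = ℓ)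
    (hs1 : 1 ≤ s) (hsℓ : s ≤ ℓ)
    (S T' : Submodule K F) (hS : finrank K S = s) (hT' : finrank K T' = ℓ - s) :
    ∃ δ : F, δ ≠ 0 ∧ IsCompl S (T'.map (LinearMap.mulLeft K δ)) := by
  subst hq hℓ
  have hFD : FiniteDimensional K F := Module.Finite.of_finite
  classical
  set q := Fintype.card K with hq
  have hq2 : 2 ≤ q := Fintype.one_lt_card
  -- first find δ with trivial intersection
  have key : ∃ δ : F, δ ≠ 0 ∧ S ⊓ (T'.map (LinearMap.mulLeft K δ)) = ⊥ := by
    by_contra hcon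
    push_neg at hcon
    -- for each nonzero δ, pick a nonzero element of the intersection
    have choice : ∀ δ : {x : F // x ≠ 0},
        ∃ (a : {a : F // a ∈ S ∧ a ≠ 0}) (b : {b : F // b ∈ T' ∧ b ≠ 0}),
          (δ : F) = (a : F) * (b : F)⁻¹ := by
      rintro ⟨δ, hδ⟩
      obtain ⟨x, hx, hx0⟩ := Submodule.exists_mem_ne_zero_of_ne_bot (hcon δ hδ)
      obtain ⟨hxS, hxT⟩ := Submodule.mem_inf.mp hx
      obtain ⟨b, hbT, hbx⟩ := Submodule.mem_map.mp hxT
      simp only [LinearMap.mulLeft_apply] at hbx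
      have hb0 : b ≠ 0 := by rintro rfl; simp at hbx; exact hx0 hbx.symm
      exact ⟨⟨x, hxS, hx0⟩, ⟨b, hbT, hb0⟩, by field_simp [← hbx]; exact hbx⟩
    choose f g hfg using choice
    have hinj : Function.Injective (fun δ => (f δ, g δ)) := by
      intro δ δ' h
      have h1 : f δ = f δ' := congrArg Prod.fst h
      have h2 : g δ = g δ' := congrArg Prod.snd h
      ext
      rw [hfg δ, hfg δ', h1, h2]
    have hcard := Fintype.card_le_of_injective _ hinj
    rw [Fintype.card_prod] at hcard
    -- compute the cards
    have cF : Fintype.card F = q ^ (finrank K F) := card_eq_pow_finrank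
    have cS : Fintype.card S = q ^ s := by rw [card_eq_pow_finrank (K := K), hS]
    have cT : Fintype.card T' = q ^ (finrank K F - s) := by
      rw [card_eq_pow_finrank (K := K), hT']
    have e1 : Fintype.card {x : F // x ≠ 0} = q ^ (finrank K F) - 1 := by
      rw [← cF]
      have h := Fintype.card_subtype_compl (fun x : F => x = 0)
      simpa [Fintype.card_subtype_eq] using h
    have eS : Fintype.card {a : F // a ∈ S ∧ a ≠ 0} = q ^ s - 1 := by
      rw [← cS]
      have : Fintype.card {a : F // a ∈ S ∧ a ≠ 0} = Fintype.card {x : S // x ≠ 0} := by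
        apply Fintype.card_congr
        exact ⟨fun a => ⟨⟨a.1, a.2.1⟩, by simpa using a.2.2⟩,
          fun x => ⟨x.1.1, x.1.2, by simpa using x.2⟩,
          fun a => rfl, fun x => rfl⟩
      rw [this]
      have h := Fintype.card_subtype_compl (fun x : S => x = 0)
      simpa [Fintype.card_subtype_eq] using h
    have eT : Fintype.card {b : F // b ∈ T' ∧ b ≠ 0} = q ^ (finrank K F - s) - 1 := by
      rw [← cT]
      have : Fintype.card {b : F // b ∈ T' ∧ b ≠ 0} = Fintype.card {x : T' // x ≠ 0} := by
        apply Fintype.card_congr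
        exact ⟨fun a => ⟨⟨a.1, a.2.1⟩, by simpa using a.2.2⟩,
          fun x => ⟨x.1.1, x.1.2, by simpa using x.2⟩,
          fun a => rfl, fun x => rfl⟩
      rw [this]
      have h := Fintype.card_subtype_compl (fun x : T' => x = 0)
      simpa [Fintype.card_subtype_eq] using h
    rw [e1, eS, eT] at hcard
    -- arithmetic contradiction
    have hmul : q ^ s * q ^ (finrank K F - s) = q ^ (finrank K F) := by
      rw [← pow_add]; congr 1; omega
    have h2s : 2 ≤ q ^ s := le_trans hq2 (Nat.le_self_pow (by omega) q)
    have h1t : 1 ≤ q ^ (finrank K F - s) := Nat.one_le_pow _ _ (by omega)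
    have := stmt0_aux _ _ h2s h1t
    omega
  obtain ⟨δ, hδ, hbot⟩ := key
  refine ⟨δ, hδ, ?_⟩
  -- dimension count to get IsCompl
  have hmapdim : finrank K (T'.map (LinearMap.mulLeft K δ)) = finrank K F - s := by
    rw [← hT']
    have hinj : Function.Injective (LinearMap.mulLeft K δ) := by
      intro x y h
      simpa [LinearMap.mulLeft_apply] using mul_left_cancel₀ hδ h
    exact (LinearEquiv.finrank_eq (Submodule.equivMapOfInjective _ hinj T')).symm
  have hdisj : Disjoint S (T'.map (LinearMap.mulLeft K δ)) :=
    disjoint_iff.mpr hbot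
  refine ⟨hdisj, ?_⟩
  rw [codisjoint_iff]
  apply Submodule.eq_top_of_finrank_eq
  have := Submodule.finrank_sup_add_finrank_inf_eq S (T'.map (LinearMap.mulLeft K δ))
  rw [hbot] at this
  simp only [finrank_bot, add_zero] at this
  rw [this, hS, hmapdim]
  omega
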